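/- For every α ∈ (0,2] and every step size τ ∈ (0, 1/λ_max], the dogleg path point is a non-ascent direction for the quadratic model evaluated at that point: ⟨p(α), Q p(α) + g⟩ ≤ 0. -/

import Mathlib

open scoped RealInnerProductSpace

/-- The dogleg path: `p(α) = -τ g` for `α ∈ (0,1]`, and
`p(α) = -τ g + (α-1)(-Q⁻¹ g + τ g)` for `α ∈ (1,2]`. -/
noncomputable def doglegPath {n : ℕ} (τ : ℝ) (g : EuclideanSpace ℝ (Fin n))
    (Qinv : EuclideanSpace ℝ (Fin n) →ₗ[ℝ] EuclideanSpace ℝ (Fin n)) (α : ℝ) :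
    EuclideanSpace ℝ (Fin n) :=
  if α ≤ 1 then (-τ) • g else (-τ) • g + (α - 1) • (-(Qinv g) + τ • g)

/-- For every `α ∈ (0,2]` and every step size `τ ∈ (0, 1/λ_max]`, the dogleg path
point is a non-ascent direction for the quadratic model evaluated at that point:
`⟨p(α), Q p(α) + g⟩ ≤ 0`. -/
theorem dogleg_nonascent {n : ℕ}
    (Q Qinv : EuclideanSpace ℝ (Fin n) →ₗ[ℝ] EuclideanSpace ℝ (Fin n))
    (hQsymm : ∀ x y : EuclideanSpace ℝ (Fin n), ⟪Q x, y⟫ = ⟪x, Q y⟫)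
    (hQpd : ∀ x : EuclideanSpace ℝ (Fin n), x ≠ 0 → 0 < ⟪Q x, x⟫)
    (hinv₁ : ∀ x, Q (Qinv x) = x) (hinv₂ : ∀ x, Qinv (Q x) = x)
    (lamMax lamMin : ℝ) (hlamMaxPos : 0 < lamMax) (hlamMinPos : 0 < lamMin)
    (hRayleighMax : ∀ x : EuclideanSpace ℝ (Fin n), ⟪Q x, x⟫ ≤ lamMax * ‖x‖ ^ 2)
    (hRayleighMin : ∀ x : EuclideanSpace ℝ (Fin n), lamMin * ‖x‖ ^ 2 ≤ ⟪Q x, x⟫)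
    (g : EuclideanSpace ℝ (Fin n)) (τ : ℝ)
    (hτpos : 0 < τ) (hτle : τ ≤ 1 / lamMax)
    (α : ℝ) (hα₀ : 0 < α) (hα₂ : α ≤ 2) :
    ⟪doglegPath τ g Qinv α, Q (doglegPath τ g Qinv α) + g⟫ ≤ 0 := by
  set a : ℝ := ⟪Q g, g⟫ with ha
  set b : ℝ := ‖g‖ ^ 2 with hb
  set c : ℝ := ⟪Qinv g, g⟫ with hc
  have hbg : b = ⟪g, g⟫ := (real_inner_self_eq_norm_sq g).symm
  have hτlam : τ * lamMax ≤ 1 := by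
    rw [div_eq_mul_inv, one_mul] at hτle
    calc τ * lamMax ≤ lamMax⁻¹ * lamMax := by
          exact mul_le_mul_of_nonneg_right hτle hlamMaxPos.le
      _ = 1 := inv_mul_cancel₀ hlamMaxPos.ne'
  have hQnn : ∀ x : EuclideanSpace ℝ (Fin n), 0 ≤ ⟪Q x, x⟫ := fun x =>
    le_trans (by positivity) (hRayleighMin x)
  have hanneg : 0 ≤ a := hQnn g
  have hbnneg : 0 ≤ b := by positivity
  -- key 1 : τ * a ≤ b
  have hkey1 : τ * a ≤ b := by
    have h1 : a ≤ lamMax * b := hRayleighMax g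
    nlinarith [hτpos.le]
  -- key 2 : τ * b ≤ c
  have hkey2 : τ * b ≤ c := by
    by_cases hg : g = 0
    · simp [hb, hc, hg]
    · set y := Qinv g with hy
      have hyne : y ≠ 0 := by
        intro h
        apply hg
        have := hinv₁ g
        rw [← hy, h, map_zero] at this
        exact this.symm
      have hcpos : 0 < c := by
        have h := hQpd y hyne
        rw [hinv₁ g] at h
        rw [hc, real_inner_comm]
        exact h
      have hbpos : 0 < b := by
        have : ‖g‖ ≠ 0 := norm_ne_zero_iff.mpr hg
        positivity
      -- Cauchy-Schwarz in Q-inner product: b^2 ≤ a * c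
      have hbsq : b ^ 2 ≤ a * c := by
        set t : ℝ := b / c with ht
        have hexp : (0:ℝ) ≤ ⟪Q (g - t • y), g - t • y⟫ := hQnn _
        have e1 : ⟪Q y, g⟫ = b := by rw [hinv₁ g, hbg]
        have e2 : ⟪Q g, y⟫ = b := by rw [hQsymm, hinv₁ g, hbg, real_inner_comm]
        have e3 : ⟪Q y, y⟫ = c := by rw [hinv₁ g, real_inner_comm]
        rw [map_sub, map_smul, inner_sub_left, inner_sub_right, inner_sub_right,
          real_inner_smul_left, real_inner_smul_left, real_inner_smul_right,
          real_inner_smul_right, e1, e2, e3, ← ha] at hexp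
        have : 0 ≤ a - b ^ 2 / c := by
          have : a - t * b - (t * b - t * (t * c)) = a - b ^ 2 / c := by
            rw [ht]; field_simp
            ring
          linarith [this ▸ hexp]
        have := (div_le_iff₀ hcpos).mp (by linarith : b ^ 2 / c ≤ a)
        linarith
      have h1 : a ≤ lamMax * b := hRayleighMax g
      -- b^2 ≤ lamMax * b * c, so b ≤ lamMax * c, so τ * b ≤ τ * lamMax * c ≤ c
      have hcnn : 0 ≤ c := hcpos.le
      nlinarith [hτpos.le, mul_le_mul_of_nonneg_right h1 hcnn]
  unfold doglegPath
  by_cases hcase : α ≤ 1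
  · simp only [if_pos hcase]
    have : ⟪(-τ) • g, Q ((-τ) • g) + g⟫ = τ ^ 2 * ⟪g, Q g⟫ - τ * b := by
      rw [map_smul, inner_add_right, real_inner_smul_left, real_inner_smul_left,
        real_inner_smul_right, hbg]
      ring
    have e4 : ⟪g, Q g⟫ = a := by rw [ha]; exact real_inner_comm _ _
    rw [this, e4]
    nlinarith [hτpos.le]
  · simp only [if_neg hcase]
    push_neg at hcase
    set s : ℝ := α - 1 with hs
    have hs0 : 0 < s := by simp [hs]; linarith
    have hs1 : s ≤ 1 := by simp [hs]; linarith
    set y := Qinv g with hy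
    have e1 : ⟪Q y, g⟫ = b := by rw [hinv₁ g, hbg]
    have e2 : ⟪Q g, y⟫ = b := by rw [hQsymm, hinv₁ g, hbg, real_inner_comm]
    have e3 : ⟪Q y, y⟫ = c := by rw [hinv₁ g, real_inner_comm]
    have e4 : ⟪g, Q g⟫ = a := by rw [real_inner_comm, ← ha]
    have e5 : ⟪y, Q g⟫ = b := by rw [← hQsymm, e1]
    have e6 : ⟪g, Q y⟫ = b := by rw [← hQsymm, e2]
    have e7 : ⟪y, g⟫ = c := by rw [hy, hc]
    have e8 : ⟪g, y⟫ = c := by rw [real_inner_comm, e7]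
    have e9 : ⟪y, Q y⟫ = c := by rw [← hQsymm, e3]
    have hexp : ⟪(-τ) • g + s • (-y + τ • g),
        Q ((-τ) • g + s • (-y + τ • g)) + g⟫ =
        (1 - s) * (τ ^ 2 * (1 - s) * a - τ * (1 - s) * b + s * τ * b - s * c) := by
      have ea : ⟪Q g, g⟫ = a := ha.symm
      have eb : ⟪g, g⟫ = b := hbg.symm
      simp only [map_add, map_smul, map_neg, inner_add_left, inner_add_right,
        inner_neg_left, inner_neg_right, real_inner_smul_left, real_inner_smul_right,
        e1, e2, e3, e4, e5, e6, e7, e8, e9, ea, eb]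
      ring
    rw [hexp]
    have h1s : 0 ≤ 1 - s := by linarith
    have ht1 : τ ^ 2 * (1 - s) * a ≤ τ * (1 - s) * b := by
      calc τ ^ 2 * (1 - s) * a = (τ * (1 - s)) * (τ * a) := by ring
        _ ≤ (τ * (1 - s)) * b :=
            mul_le_mul_of_nonneg_left hkey1 (by positivity)
        _ = τ * (1 - s) * b := by ring
    have ht2 : s * τ * b ≤ s * c := by
      calc s * τ * b = s * (τ * b) := by ring
        _ ≤ s * c := mul_le_mul_of_nonneg_left hkey2 hs0.le
    have hX : τ ^ 2 * (1 - s) * a - τ * (1 - s) * b + s * τ * b - s * c ≤ 0 := by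
      linarith
    exact mul_nonpos_of_nonneg_of_nonpos h1s hX
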